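/- Let $X = \sum_{i=1}^N X_i$ where the $X_i$ are Bernoulli random variables such that for every $k \in [N]$, $\mathbb{E}[X_k \mid X_1,\dots,X_{k-1}] \ge p$ for some $p \in (0,1)$. Let $\mu = Np$. Then for every $\Delta > \mu/2$, $\Pr[X \le \mu - \Delta] \le \exp\left(\frac{-3\Delta + \mu}{4}\right)$. -/

import Mathlib

open MeasureTheory ProbabilityTheory

theorem azuma_hoeffding_style_large_deviation
    {Ω : Type*} [MeasurableSpace Ω] (μ : Measure Ω) [IsProbabilityMeasure μ]
    (N : ℕ) (X : ℕ → Ω → ℝ) (p : ℝ) (hp : p ∈ Set.Ioo (0:ℝ) 1)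
    (hmeas : ∀ i, Measurable (X i))
    (hBer : ∀ i, ∀ ω, X i ω = 0 ∨ X i ω = 1)
    (hcond : ∀ k < N, ∀ᵐ ω ∂μ,
      p ≤ MeasureTheory.condExp
            (⨆ i : Fin k, MeasurableSpace.comap (X i) Real.measurableSpace) μ (X k) ω)
    (Δ : ℝ) (hΔ : N * p / 2 < Δ) :
    (μ {ω | ∑ i ∈ Finset.range N, X i ω ≤ N * p - Δ}).toReal ≤
      Real.exp ((-3 * Δ + N * p) / 4) := by
  obtain ⟨hp0, hp1⟩ := hp
  -- the event
  set S : Ω → ℝ := fun ω => ∑ i ∈ Finset.range N, X i ω with hS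
  have hSmeas : Measurable S := Finset.measurable_sum _ fun i _ => hmeas i
  have hXbd : ∀ i ω, 0 ≤ X i ω ∧ X i ω ≤ 1 := by
    intro i ω; rcases hBer i ω with h | h <;> rw [h] <;> norm_num
  have hS0 : ∀ ω, 0 ≤ S ω := fun ω =>
    Finset.sum_nonneg fun i _ => (hXbd i ω).1
  by_cases hcase : (N : ℝ) * p - Δ < 0
  · -- event is empty
    have : {ω | S ω ≤ (N:ℝ) * p - Δ} = ∅ := by
      ext ω; simp only [Set.mem_setOf_eq, Set.mem_empty_iff_false, iff_false, not_le]
      exact lt_of_lt_of_le hcase (hS0 ω)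
    rw [hS] at this
    rw [this]
    simp [Real.exp_nonneg]
  push_neg at hcase
  -- auxiliary product process
  set Y : ℕ → Ω → ℝ := fun k ω => ∏ i ∈ Finset.range k, (1 - X i ω / 2) with hY
  have hfac : ∀ i ω, (0:ℝ) ≤ 1 - X i ω / 2 ∧ 1 - X i ω / 2 ≤ 1 := by
    intro i ω; rcases hBer i ω with h | h <;> rw [h] <;> norm_num
  have hY0 : ∀ k ω, 0 ≤ Y k ω := fun k ω =>
    Finset.prod_nonneg fun i _ => (hfac i ω).1
  have hY1 : ∀ k ω, Y k ω ≤ 1 := fun k ω =>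
    Finset.prod_le_one (fun i _ => (hfac i ω).1) (fun i _ => (hfac i ω).2)
  have hYmeas : ∀ k, Measurable (Y k) := fun k =>
    Finset.measurable_prod _ fun i _ => measurable_const.sub ((hmeas i).div_const 2)
  have hYint : ∀ k, Integrable (Y k) μ := by
    intro k
    refine Integrable.mono' (integrable_const 1) (hYmeas k).aestronglyMeasurable ?_
    filter_upwards with ω
    rw [Real.norm_eq_abs, abs_of_nonneg (hY0 k ω)]
    exact hY1 k ω
  have hXint : ∀ k, Integrable (X k) μ := by
    intro k
    refine Integrable.mono' (integrable_const 1) (hmeas k).aestronglyMeasurable ?_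
    filter_upwards with ω
    rw [Real.norm_eq_abs, abs_of_nonneg (hXbd k ω).1]
    exact (hXbd k ω).2
  have hYXint : ∀ k, Integrable (fun ω => Y k ω * X k ω) μ := by
    intro k
    refine Integrable.mono' (integrable_const 1)
      ((hYmeas k).mul (hmeas k)).aestronglyMeasurable ?_
    filter_upwards with ω
    rw [Real.norm_eq_abs, abs_of_nonneg (mul_nonneg (hY0 k ω) (hXbd k ω).1)]
    calc Y k ω * X k ω ≤ 1 * 1 :=
          mul_le_mul (hY1 k ω) (hXbd k ω).2 (hXbd k ω).1 zero_le_one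
      _ = 1 := one_mul 1
  set F : ℕ → MeasurableSpace Ω :=
    fun k => ⨆ i : Fin k, MeasurableSpace.comap (X i) Real.measurableSpace with hF
  have hFle : ∀ k, F k ≤ ‹MeasurableSpace Ω› := fun k =>
    iSup_le fun i => (hmeas i).comap_le
  have hXFk : ∀ k, ∀ i < k, Measurable[F k] (X i) := by
    intro k i hi s hs
    exact le_iSup (fun j : Fin k => MeasurableSpace.comap (X (j : ℕ)) Real.measurableSpace)
      ⟨i, hi⟩ _ ⟨s, hs, rfl⟩
  have hYsm : ∀ k, StronglyMeasurable[F k] (Y k) := by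
    intro k
    refine Measurable.stronglyMeasurable ?_
    exact Finset.measurable_prod _ fun i hi =>
      measurable_const.sub ((hXFk k i (Finset.mem_range.mp hi)).div_const 2)
  -- key induction
  have hkey : ∀ k, k ≤ N → ∫ ω, Y k ω ∂μ ≤ (1 - p / 2) ^ k := by
    intro k
    induction k with
    | zero =>
      intro _
      simp only [hY, Finset.range_zero, Finset.prod_empty, pow_zero]
      simp [integral_const]
    | succ k ih =>
      intro hk1
      have hk : k < N := hk1
      have ihk := ih (le_of_lt hk)
      have hsplit : ∀ ω, Y (k + 1) ω = Y k ω - Y k ω * X k ω / 2 := by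
        intro ω
        simp only [hY, Finset.prod_range_succ]
        ring
      have hrw : ∫ ω, Y (k + 1) ω ∂μ
          = ∫ ω, Y k ω ∂μ - (∫ ω, Y k ω * X k ω ∂μ) / 2 := by
        rw [show (fun ω => Y (k+1) ω) = fun ω => Y k ω - Y k ω * X k ω / 2 from
          funext hsplit]
        rw [integral_sub (hYint k) ((hYXint k).div_const 2), integral_div]
      -- pull-out property
      have hmul : μ[fun ω => Y k ω * X k ω | F k]
          =ᵐ[μ] fun ω => Y k ω * (μ[X k | F k]) ω :=
        condExp_mul_of_stronglyMeasurable_left (hYsm k) (hYXint k) (hXint k)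
      have hieq : ∫ ω, Y k ω * X k ω ∂μ = ∫ ω, Y k ω * (μ[X k | F k]) ω ∂μ := by
        rw [← integral_condExp (hFle k) (f := fun ω => Y k ω * X k ω)]
        exact integral_congr_ae hmul
      have hint2 : Integrable (fun ω => Y k ω * (μ[X k | F k]) ω) μ :=
        (integrable_condExp (m := F k) (f := fun ω => Y k ω * X k ω)).congr hmul
      have hge : p * ∫ ω, Y k ω ∂μ ≤ ∫ ω, Y k ω * X k ω ∂μ := by
        rw [hieq, ← integral_const_mul]
        refine integral_mono_ae ((hYint k).const_mul p) hint2 ?_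
        filter_upwards [hcond k hk] with ω hω
        calc p * Y k ω = Y k ω * p := mul_comm _ _
          _ ≤ Y k ω * (μ[X k | F k]) ω :=
              mul_le_mul_of_nonneg_left hω (hY0 k ω)
      have hplt : (0:ℝ) ≤ 1 - p / 2 := by linarith
      have hInt0 : 0 ≤ ∫ ω, Y k ω ∂μ :=
        integral_nonneg fun ω => hY0 k ω
      calc ∫ ω, Y (k + 1) ω ∂μ
          = ∫ ω, Y k ω ∂μ - (∫ ω, Y k ω * X k ω ∂μ) / 2 := hrw
        _ ≤ (1 - p / 2) * ∫ ω, Y k ω ∂μ := by nlinarith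
        _ ≤ (1 - p / 2) * (1 - p / 2) ^ k :=
            mul_le_mul_of_nonneg_left ihk hplt
        _ = (1 - p / 2) ^ (k + 1) := (pow_succ' _ _).symm
  -- exponential representation of Y N
  have hYexp : ∀ ω, Y N ω = Real.exp (-(S ω) * Real.log 2) := by
    intro ω
    have : ∀ i ∈ Finset.range N, (1 - X i ω / 2) = Real.exp (-(X i ω) * Real.log 2) := by
      intro i _
      rcases hBer i ω with h | h <;> rw [h]
      · norm_num
      · rw [show -(1:ℝ) * Real.log 2 = -Real.log 2 by ring, Real.exp_neg,
          Real.exp_log two_pos]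
        norm_num
    rw [hY]
    simp only []
    rw [Finset.prod_congr rfl this, ← Real.exp_sum]
    congr 1
    rw [hS]
    simp only [neg_mul, Finset.sum_neg_distrib, Finset.sum_mul]
  -- Markov argument
  set c : ℝ := (N:ℝ) * p - Δ with hc
  set A : Set Ω := {ω | S ω ≤ c} with hA
  have hAmeas : MeasurableSet A := measurableSet_le hSmeas measurable_const
  have hlow : ∀ ω ∈ A, Real.exp (-c * Real.log 2) ≤ Y N ω := by
    intro ω hω
    rw [hYexp ω]
    apply Real.exp_le_exp.mpr
    have h2 : (0:ℝ) < Real.log 2 := Real.log_pos one_lt_two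
    have hω' : S ω ≤ c := hω
    nlinarith [mul_le_mul_of_nonneg_right hω' h2.le]
  have hstep1 : (μ A).toReal * Real.exp (-c * Real.log 2) ≤ ∫ ω in A, Y N ω ∂μ := by
    have : (μ A).toReal * Real.exp (-c * Real.log 2)
        = ∫ _ω in A, Real.exp (-c * Real.log 2) ∂μ := by
      rw [setIntegral_const, smul_eq_mul, measureReal_def]
    rw [this]
    refine setIntegral_mono_on (integrable_const _).integrableOn
      ((hYint N).integrableOn) hAmeas ?_
    exact hlow
  have hstep2 : ∫ ω in A, Y N ω ∂μ ≤ ∫ ω, Y N ω ∂μ := by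
    refine setIntegral_le_integral (hYint N) ?_
    filter_upwards with ω
    exact hY0 N ω
  have hstep3 : (1 - p / 2 : ℝ) ^ N ≤ Real.exp (-(N * p) / 2) := by
    have h1 : (1 - p / 2 : ℝ) ≤ Real.exp (-(p / 2)) := by
      have := Real.add_one_le_exp (-(p / 2))
      linarith
    calc (1 - p / 2 : ℝ) ^ N ≤ (Real.exp (-(p / 2))) ^ N :=
          pow_le_pow_left₀ (by linarith) h1 N
      _ = Real.exp (N * -(p / 2)) := by rw [← Real.exp_nat_mul]
      _ = Real.exp (-(N * p) / 2) := by ring_nf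
  have hmark : (μ A).toReal ≤ Real.exp (c * Real.log 2) * Real.exp (-(N * p) / 2) := by
    have hE : (0:ℝ) < Real.exp (c * Real.log 2) := Real.exp_pos _
    have hchain : (μ A).toReal * Real.exp (-c * Real.log 2) ≤ Real.exp (-(N * p) / 2) :=
      le_trans hstep1 (le_trans hstep2 (le_trans (hkey N le_rfl) hstep3))
    have hinv : Real.exp (-c * Real.log 2) * Real.exp (c * Real.log 2) = 1 := by
      rw [← Real.exp_add]
      ring_nf
      exact Real.exp_zero
    calc (μ A).toReal
        = (μ A).toReal * Real.exp (-c * Real.log 2) * Real.exp (c * Real.log 2) := by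
          rw [mul_assoc, hinv, mul_one]
      _ ≤ Real.exp (-(N * p) / 2) * Real.exp (c * Real.log 2) :=
          mul_le_mul_of_nonneg_right hchain hE.le
      _ = Real.exp (c * Real.log 2) * Real.exp (-(N * p) / 2) := mul_comm _ _
  have hfinal : Real.exp (c * Real.log 2) * Real.exp (-(N * p) / 2)
      ≤ Real.exp ((-3 * Δ + N * p) / 4) := by
    rw [← Real.exp_add]
    apply Real.exp_le_exp.mpr
    have hlog : Real.log 2 ≤ 3 / 4 := by
      have := Real.log_two_lt_d9
      linarith
    have hlogpos : (0:ℝ) < Real.log 2 := Real.log_pos one_lt_two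
    nlinarith [hcase]
  exact le_trans hmark hfinal
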